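/- Let e be the H^{-1} energy density associated to f as above. If e⁻¹(0) has more than one point, then there exists b ∈ ℝ such that f(a) = b·a for all a ∈ e⁻¹(0); moreover such b satisfies f*(b) = 0. -/

import Mathlib

open Filter Set Topology MeasureTheory

noncomputable section
open scoped Classical

/-- Convexity for extended-real-valued functions on `ℝ`. -/
def EConvex (f : ℝ → EReal) : Prop :=
  ∀ x y t : ℝ, 0 ≤ t → t ≤ 1 →
    f (t * x + (1 - t) * y) ≤ (t : EReal) * f x + ((1 - t : ℝ) : EReal) * f y

/-- Legendre–Fenchel (convex) conjugate: `f*(b) = sup_a (a·b − f(a))`. -/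
def econj (f : ℝ → EReal) (b : ℝ) : EReal := ⨆ a : ℝ, ((a * b : ℝ) : EReal) - f a

/-- The `H^{-1}` energy density associated to `f`:
`e(a) = a·f(a) − 2∫₀ᵃ f(s) ds` for `a ∈ dom f`, `+∞` otherwise. -/
def eDen (f : ℝ → EReal) (a : ℝ) : EReal :=
  if f a = ⊤ then ⊤
  else ((a * (f a).toReal - 2 * ∫ s in (0 : ℝ)..a, (f s).toReal : ℝ) : EReal)

private lemma chord_le {g : ℝ → ℝ} {q : ℝ} (hg : ConvexOn ℝ (Icc 0 q) g)
    {x y s : ℝ} (hx : x ∈ Icc 0 q) (hy : y ∈ Icc 0 q) (hxy : x < y)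
    (hs : s ∈ Icc x y) :
    g s ≤ ((y - s) * g x + (s - x) * g y) / (y - x) := by
  have hd : (0:ℝ) < y - x := by linarith
  have ha : 0 ≤ (y - s) / (y - x) := by
    apply div_nonneg _ hd.le; linarith [hs.2]
  have hb : 0 ≤ (s - x) / (y - x) := by
    apply div_nonneg _ hd.le; linarith [hs.1]
  have hab : (y - s)/(y-x) + (s - x)/(y-x) = 1 := by field_simp; ring
  have h2 := hg.2 hx hy ha hb hab
  have hcombo : ((y - s)/(y-x)) • x + ((s - x)/(y-x)) • y = s := by
    simp only [smul_eq_mul]; field_simp; ring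
  rw [hcombo] at h2
  refine h2.trans (le_of_eq ?_)
  simp only [smul_eq_mul]
  field_simp

private lemma convexOn_intervalIntegrable {g : ℝ → ℝ} {q : ℝ} (hq : 0 < q)
    (hg : ConvexOn ℝ (Icc 0 q) g) : IntervalIntegrable g volume 0 q := by
  set C : ℝ := 2 * (|g 0| + |g (q/2)| + |g q|) with hC
  have habs : ∀ s ∈ Icc (0:ℝ) q, ‖g s‖ ≤ C := by
    intro s hs
    obtain ⟨hs0, hsq⟩ := hs
    rw [Real.norm_eq_abs, abs_le]
    have habs0 := abs_nonneg (g 0)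
    have habsm := abs_nonneg (g (q/2))
    have habsq := abs_nonneg (g q)
    constructor
    · -- lower bound
      rcases le_or_gt s (q/2) with hcase | hcase
      · have hslt : s < q := by linarith
        have hch := chord_le hg (x := s) (y := q) (s := q/2)
          ⟨hs0, hsq⟩ ⟨hq.le, le_refl q⟩ hslt ⟨hcase, by linarith⟩
        have hd : (0:ℝ) < q - s := by linarith
        rw [le_div_iff₀ hd] at hch
        -- hch : g (q/2) * (q - s) ≤ (q - q/2) * g s + (q/2 - s) * g q
        have h1 : -(q*|g (q/2)|) ≤ g (q/2) * (q - s) := by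
          nlinarith [mul_nonneg hd.le (by linarith [neg_abs_le (g (q/2))] : (0:ℝ) ≤ g (q/2) + |g (q/2)|),
            mul_nonneg hs0 habsm]
        have h2 : (q/2 - s) * g q ≤ (q/2) * |g q| := by
          nlinarith [mul_nonneg (by linarith : (0:ℝ) ≤ q/2 - s) (by linarith [le_abs_self (g q)] : (0:ℝ) ≤ |g q| - g q),
            mul_nonneg hs0 habsq]
        nlinarith [mul_nonneg hq.le habs0]
      · have h0s : (0:ℝ) < s := by linarith
        have hch := chord_le hg (x := 0) (y := s) (s := q/2)
          ⟨le_refl 0, hq.le⟩ ⟨hs0, hsq⟩ h0s ⟨by linarith, hcase.le⟩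
        rw [le_div_iff₀ (by linarith : (0:ℝ) < s - 0)] at hch
        -- hch : g (q/2) * s ≤ (s - q/2) * g 0 + (q/2 - 0) * g s
        have h1 : -(q*|g (q/2)|) ≤ g (q/2) * s := by
          nlinarith [mul_nonneg hs0 (by linarith [neg_abs_le (g (q/2))] : (0:ℝ) ≤ g (q/2) + |g (q/2)|),
            mul_nonneg (by linarith : (0:ℝ) ≤ q - s) habsm]
        have h2 : (s - q/2) * g 0 ≤ q * |g 0| := by
          nlinarith [mul_nonneg (by linarith : (0:ℝ) ≤ s - q/2) (by linarith [le_abs_self (g 0)] : (0:ℝ) ≤ |g 0| - g 0),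
            mul_nonneg (by linarith : (0:ℝ) ≤ q/2 + (q - s)) habs0]
        nlinarith [mul_nonneg hq.le habsq]
    · -- upper bound
      rcases eq_or_lt_of_le hs0 with rfl | h0s
      · simp only [hC]; nlinarith [le_abs_self (g 0)]
      rcases eq_or_lt_of_le hsq with rfl | hslt
      · simp only [hC]; nlinarith [le_abs_self (g s)]
      have hch := chord_le hg (x := 0) (y := q) (s := s)
        ⟨le_refl 0, hq.le⟩ ⟨hq.le, le_refl q⟩ hq ⟨h0s.le, hslt.le⟩
      refine hch.trans ?_
      rw [div_le_iff₀ (by linarith : (0:ℝ) < q - 0)]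
      have h1 : (q - s) * g 0 ≤ q * |g 0| := by
        nlinarith [mul_nonneg (by linarith : (0:ℝ) ≤ q - s) (by linarith [le_abs_self (g 0)] : (0:ℝ) ≤ |g 0| - g 0),
          mul_nonneg hs0 habs0]
      have h2 : s * g q ≤ q * |g q| := by
        nlinarith [mul_nonneg hs0 (by linarith [le_abs_self (g q)] : (0:ℝ) ≤ |g q| - g q),
          mul_nonneg (by linarith : (0:ℝ) ≤ q - s) habsq]
      nlinarith [mul_nonneg hq.le habsm]
  -- use boundedness + continuity
  have hcont : ContinuousOn g (Ioo 0 q) := by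
    have h := hg.continuousOn_interior
    rwa [interior_Icc] at h
  have hmeas : AEStronglyMeasurable g (volume.restrict (Icc (0:ℝ) q)) := by
    rw [← Measure.restrict_congr_set Ioo_ae_eq_Icc]
    exact hcont.aestronglyMeasurable measurableSet_Ioo
  have hint : IntegrableOn g (Icc (0:ℝ) q) volume :=
    ⟨hmeas, HasFiniteIntegral.restrict_of_bounded (C := C) measure_Icc_lt_top
      ((ae_restrict_iff' measurableSet_Icc).2 (Filter.Eventually.of_forall habs))⟩
  have : IntegrableOn g (uIoc (0:ℝ) q) volume := by
    apply hint.mono_set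
    rw [uIoc_of_le hq.le]
    exact Ioc_subset_Icc_self
  exact intervalIntegrable_iff.2 this

private lemma integral_le_trapezoid {g : ℝ → ℝ} {q x y : ℝ} (hg : ConvexOn ℝ (Icc 0 q) g)
    (hx : x ∈ Icc 0 q) (hy : y ∈ Icc 0 q) (hxy : x < y)
    (hint : IntervalIntegrable g volume x y) :
    ∫ s in x..y, g s ≤ (y - x) * (g x + g y) / 2 := by
  have hd : (0:ℝ) < y - x := by linarith
  have hle : ∀ s ∈ Icc x y, g s ≤ (y * g x - x * g y)/(y-x) + ((g y - g x)/(y-x)) * s := by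
    intro s hs
    refine (chord_le hg hx hy hxy hs).trans (le_of_eq ?_)
    field_simp
    ring
  have hcont : Continuous fun s : ℝ => (y * g x - x * g y)/(y-x) + ((g y - g x)/(y-x)) * s := by
    continuity
  have hmono := intervalIntegral.integral_mono_on hxy.le hint
    (hcont.intervalIntegrable x y) hle
  refine hmono.trans (le_of_eq ?_)
  have hc1 : IntervalIntegrable (fun _ : ℝ => (y * g x - x * g y)/(y-x)) volume x y :=
    continuous_const.intervalIntegrable x y
  have hc2 : IntervalIntegrable (fun u : ℝ => (g y - g x)/(y-x) * u) volume x y :=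
    (continuous_const.mul continuous_id).intervalIntegrable x y
  rw [intervalIntegral.integral_add hc1 hc2,
    intervalIntegral.integral_const, intervalIntegral.integral_const_mul, integral_id]
  simp only [smul_eq_mul]
  field_simp
  ring

/-- If `e⁻¹(0)` has more than one point, then there exists `b ∈ ℝ` such that
`f(a) = b·a` for all `a ∈ e⁻¹(0)`; moreover such `b` satisfies `f*(b) = 0`. -/
theorem statement8 (f : ℝ → EReal) (hconv : EConvex f)
    (hlsc : LowerSemicontinuous f) (hf0 : f 0 = 0)
    (hneg : ∀ a : ℝ, a < 0 → f a = ⊤)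
    (hdom : (interior {a : ℝ | f a ≠ ⊤}).Nonempty)
    (hmulti : ∃ a₁ a₂ : ℝ, a₁ ≠ a₂ ∧ eDen f a₁ = 0 ∧ eDen f a₂ = 0) :
    ∃ b : ℝ, (∀ a : ℝ, eDen f a = 0 → f a = ((b * a : ℝ) : EReal)) ∧
      econj f b = 0 := by
  -- `f` never takes the value `⊥` on positive reals
  have hbot : ∀ s : ℝ, 0 < s → f s ≠ ⊥ := by
    intro s hs hbotv
    have hs1 : (0:ℝ) < s + 1 := by linarith
    have ht : (0:ℝ) < s/(s+1) := by positivity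
    have ht1 : s/(s+1) ≤ 1 := by rw [div_le_one hs1]; linarith
    have ht1' : (0:ℝ) < 1 - s/(s+1) := by
      rw [sub_pos, div_lt_one hs1]; linarith
    have hcv := hconv (-1) s (s/(s+1)) ht.le ht1
    have hcomb : s/(s+1) * (-1) + (1 - s/(s+1)) * s = 0 := by field_simp; ring
    rw [hcomb, hf0, hneg (-1) (by norm_num), hbotv,
      EReal.coe_mul_top_of_pos ht, EReal.coe_mul_bot_of_pos ht1',
      EReal.add_bot] at hcv
    exact absurd hcv (by simp)
  -- convexity comparison with the chord through the origin
  have lemA : ∀ p q : ℝ, 0 ≤ p → p ≤ q → 0 < q → f q ≠ ⊤ →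
      f p ≠ ⊤ ∧ q * (f p).toReal ≤ p * (f q).toReal := by
    intro p q hp hpq hq hfq
    have ht0 : 0 ≤ p/q := by positivity
    have ht1 : p/q ≤ 1 := by rw [div_le_one hq]; exact hpq
    have hcomb : p/q * q + (1 - p/q) * 0 = p := by field_simp; ring
    have hcv := hconv q 0 (p/q) ht0 ht1
    rw [hcomb, hf0, mul_zero, add_zero, ← EReal.coe_toReal hfq (hbot q hq),
      ← EReal.coe_mul] at hcv
    have hfp_top : f p ≠ ⊤ := ne_top_of_le_ne_top (EReal.coe_ne_top _) hcv
    refine ⟨hfp_top, ?_⟩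
    rcases eq_or_lt_of_le hp with h | h
    · rw [← h, hf0]; simp
    · have h2 := EReal.toReal_le_toReal hcv (hbot p h) (EReal.coe_ne_top _)
      rw [EReal.toReal_coe] at h2
      have h3 := mul_le_mul_of_nonneg_left h2 hq.le
      calc q * (f p).toReal ≤ q * (p / q * (f q).toReal) := h3
        _ = p * (f q).toReal := by field_simp
  -- the integral inequality coming from `eDen f q = 0`
  have lemB : ∀ p q : ℝ, 0 < p → p < q → eDen f q = 0 →
      p * (f q).toReal ≤ q * (f p).toReal := by
    intro p q hp hpq hq0
    have hq : (0:ℝ) < q := hp.trans hpq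
    have hfq : f q ≠ ⊤ := by
      intro h; rw [eDen, if_pos h] at hq0; exact absurd hq0 (by simp)
    have heq : q * (f q).toReal - 2 * ∫ s in (0:ℝ)..q, (f s).toReal = 0 := by
      rw [eDen, if_neg hfq] at hq0; exact_mod_cast hq0
    have hfin : ∀ s ∈ Icc (0:ℝ) q, f s = (((f s).toReal : ℝ) : EReal) := by
      intro s hs
      rcases eq_or_lt_of_le hs.1 with h | h
      · rw [← h, hf0]; simp
      · exact (EReal.coe_toReal (lemA s q hs.1 hs.2 hq hfq).1 (hbot s h)).symm
    -- convexity of the real-valued restriction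
    have hgconv : ConvexOn ℝ (Icc 0 q) (fun s => (f s).toReal) := by
      refine ⟨convex_Icc 0 q, ?_⟩
      intro x hx y hy a b ha hb hab
      have hb' : b = 1 - a := by linarith
      subst hb'
      have hcv := hconv x y a ha (by linarith)
      have hmem : a • x + (1 - a) • y ∈ Icc (0:ℝ) q :=
        (convex_Icc 0 q) hx hy ha hb hab
      simp only [smul_eq_mul] at hmem ⊢
      rw [hfin x hx, hfin y hy, hfin _ hmem, ← EReal.coe_mul, ← EReal.coe_mul,
        ← EReal.coe_add, EReal.coe_le_coe_iff] at hcv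
      exact hcv
    have hintq : IntervalIntegrable (fun s => (f s).toReal) volume 0 q :=
      convexOn_intervalIntegrable hq hgconv
    have hint1 : IntervalIntegrable (fun s => (f s).toReal) volume 0 p := by
      apply hintq.mono_set
      rw [uIcc_of_le hp.le, uIcc_of_le hq.le]
      exact Icc_subset_Icc le_rfl hpq.le
    have hint2 : IntervalIntegrable (fun s => (f s).toReal) volume p q := by
      apply hintq.mono_set
      rw [uIcc_of_le hpq.le, uIcc_of_le hq.le]
      exact Icc_subset_Icc hp.le le_rfl
    have hsplit : ∫ s in (0:ℝ)..q, (f s).toReal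
        = (∫ s in (0:ℝ)..p, (f s).toReal) + ∫ s in p..q, (f s).toReal :=
      (intervalIntegral.integral_add_adjacent_intervals hint1 hint2).symm
    have hI1 : ∫ s in (0:ℝ)..p, (f s).toReal
        ≤ (p - 0) * ((f 0).toReal + (f p).toReal) / 2 :=
      integral_le_trapezoid hgconv ⟨le_refl 0, hq.le⟩ ⟨hp.le, hpq.le⟩ hp hint1
    have hI2 : ∫ s in p..q, (f s).toReal
        ≤ (q - p) * ((f p).toReal + (f q).toReal) / 2 :=
      integral_le_trapezoid hgconv ⟨hp.le, hpq.le⟩ ⟨hq.le, le_refl q⟩ hpq hint2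
    have hg00 : (f 0).toReal = 0 := by rw [hf0]; simp
    rw [hg00] at hI1
    nlinarith [hI1, hI2, hsplit, heq]
  -- the zero set of `eDen` consists of nonnegative numbers
  have hzero_nonneg : ∀ a : ℝ, eDen f a = 0 → 0 ≤ a := by
    intro a ha
    by_contra h
    push_neg at h
    rw [eDen, if_pos (hneg a h)] at ha
    exact absurd ha (by simp)
  have hzero_top : ∀ a : ℝ, eDen f a = 0 → f a ≠ ⊤ := by
    intro a ha h
    rw [eDen, if_pos h] at ha
    exact absurd ha (by simp)
  -- pick a positive zero of `eDen`
  obtain ⟨c, hc0, hcz⟩ : ∃ c : ℝ, 0 < c ∧ eDen f c = 0 := by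
    obtain ⟨a₁, a₂, hne, h1, h2⟩ := hmulti
    rcases lt_trichotomy a₁ a₂ with h | h | h
    · exact ⟨a₂, lt_of_le_of_lt (hzero_nonneg a₁ h1) h, h2⟩
    · exact absurd h hne
    · exact ⟨a₁, lt_of_le_of_lt (hzero_nonneg a₂ h2) h, h1⟩
  have hfc_top : f c ≠ ⊤ := hzero_top c hcz
  refine ⟨(f c).toReal / c, ?_, ?_⟩
  · intro a ha
    have ha0 := hzero_nonneg a ha
    have hfa_top := hzero_top a ha
    rcases eq_or_lt_of_le ha0 with h | h
    · rw [← h, hf0]; simp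
    · have hkey : a * (f c).toReal = c * (f a).toReal := by
        rcases lt_trichotomy a c with hac | hac | hac
        · have hA := (lemA a c h.le hac.le hc0 hfc_top).2
          have hB := lemB a c h hac hcz
          linarith
        · rw [hac]
        · have hA := (lemA c a hc0.le hac.le h hfa_top).2
          have hB := lemB c a hc0 hac ha
          linarith
      rw [← EReal.coe_toReal hfa_top (hbot a h), EReal.coe_eq_coe_iff]
      field_simp
      linarith
  · -- the conjugate vanishes at b
    have hflower : ∀ a : ℝ, ((a * ((f c).toReal / c) : ℝ) : EReal) ≤ f a := by
      intro a
      rcases lt_trichotomy a 0 with h | h | h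
      · rw [hneg a h]; exact le_top
      · subst h; rw [hf0]; simp
      · by_cases hfa : f a = ⊤
        · rw [hfa]; exact le_top
        · rw [← EReal.coe_toReal hfa (hbot a h), EReal.coe_le_coe_iff]
          have hkey : a * (f c).toReal ≤ c * (f a).toReal := by
            rcases lt_trichotomy a c with hac | hac | hac
            · exact lemB a c h hac hcz
            · rw [hac]
            · exact (lemA c a hc0.le hac.le h hfa).2
          have hrw : a * ((f c).toReal / c) = a * (f c).toReal / c := by ring
          rw [hrw, div_le_iff₀ hc0]
          nlinarith
    have hle : econj f ((f c).toReal / c) ≤ 0 := by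
      rw [econj]
      apply iSup_le
      intro a
      have h1 : ((a * ((f c).toReal / c) : ℝ) : EReal) ≤ f a := hflower a
      calc ((a * ((f c).toReal / c) : ℝ) : EReal) - f a
          ≤ ((a * ((f c).toReal / c) : ℝ) : EReal)
            - ((a * ((f c).toReal / c) : ℝ) : EReal) :=
            EReal.sub_le_sub (le_refl _) h1
        _ = 0 := by rw [← EReal.coe_sub]; simp
    have hge : (0:EReal) ≤ econj f ((f c).toReal / c) := by
      rw [econj]
      have h0 := le_iSup (fun a : ℝ => ((a * ((f c).toReal / c) : ℝ) : EReal) - f a) 0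
      simpa [hf0] using h0
    exact le_antisymm hle hge
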